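/- Let n = 2, B₀ = √(8/3), and let l be any real number with l(l-1)(l-2) = 3/8. Then for every D ∈ ℝ, the function f(y) = B₀ y^{3/2} + D y^l satisfies, exactly for all y > 0, the identity f(y) · f'''(y) = -1 + (3/8) D² y^{2l-3}. In particular, since l > 2 implies 2l - 3 > 1, the residual f·f''' + 1 = (3/8) D² y^{2l-3} is o(y) as y → 0⁺, so the whole one-parameter family solves the interface equation f f''' = -1 + y to higher order. -/

import Mathlib

open Asymptotics
open scoped Topology

lemma derivEq (a b p q : ℝ) {z : ℝ} (hz : 0 < z) :
    deriv (fun w : ℝ => a * w ^ p + b * w ^ q) z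
      = a * p * z ^ (p - 1) + b * q * z ^ (q - 1) := by
  have h1 := (Real.hasDerivAt_rpow_const (x := z) (p := p) (Or.inl hz.ne')).const_mul a
  have h2 := (Real.hasDerivAt_rpow_const (x := z) (p := q) (Or.inl hz.ne')).const_mul b
  have h : deriv (fun w : ℝ => a * w ^ p + b * w ^ q) z = _ := (h1.add h2).deriv
  rw [h]; ring

lemma derivCongr {F G : ℝ → ℝ} (h : ∀ z ∈ Set.Ioi (0:ℝ), F z = G z)
    {z : ℝ} (hz : 0 < z) : deriv F z = deriv G z := by
  apply Filter.EventuallyEq.deriv_eq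
  filter_upwards [IsOpen.mem_nhds isOpen_Ioi hz] with w hw
  exact h w hw

lemma iter3 (a b p q : ℝ) {y : ℝ} (hy : 0 < y) :
    iteratedDeriv 3 (fun z : ℝ => a * z ^ p + b * z ^ q) y
      = a * (p * (p-1) * (p-2)) * y ^ (p - 3) + b * (q * (q-1) * (q-2)) * y ^ (q - 3) := by
  have d1 : ∀ z ∈ Set.Ioi (0:ℝ), deriv (fun w : ℝ => a * w ^ p + b * w ^ q) z
      = (a*p) * z ^ (p-1) + (b*q) * z ^ (q-1) := fun z hz => by
    rw [derivEq a b p q hz]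
  have d2 : ∀ z ∈ Set.Ioi (0:ℝ), deriv (deriv (fun w : ℝ => a * w ^ p + b * w ^ q)) z
      = (a*p*(p-1)) * z ^ (p-2) + (b*q*(q-1)) * z ^ (q-2) := fun z hz => by
    rw [derivCongr d1 hz, derivEq (a*p) (b*q) (p-1) (q-1) hz,
      show p-1-1 = p-2 by ring, show q-1-1 = q-2 by ring]
  have d3 : deriv (deriv (deriv (fun w : ℝ => a * w ^ p + b * w ^ q))) y
      = (a*p*(p-1)*(p-2)) * y ^ (p-3) + (b*q*(q-1)*(q-2)) * y ^ (q-3) := by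
    rw [derivCongr d2 hy, derivEq (a*p*(p-1)) (b*q*(q-1)) (p-2) (q-2) hy,
      show p-2-1 = p-3 by ring, show q-2-1 = q-3 by ring]
  rw [show (3:ℕ) = 0+1+1+1 from rfl]
  simp only [iteratedDeriv_succ, iteratedDeriv_zero]
  rw [d3]; ring

/-- For `n = 2`, `B₀ = √(8/3)` and any real `l` with `l(l-1)(l-2) = 3/8`,
the whole one-parameter family `f(y) = B₀ y^(3/2) + D y^l` satisfies, exactly for all
`y > 0`, `f(y) f'''(y) = -1 + (3/8) D² y^(2l-3)`; in particular, if `l > 2` then the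
residual `f f''' + 1` is `o(y)` as `y → 0⁺`. -/
theorem stmt_7 (B₀ l : ℝ) (hB₀ : B₀ = Real.sqrt (8/3))
    (hl : l * (l - 1) * (l - 2) = 3/8) :
    (∀ D : ℝ, ∀ y : ℝ, 0 < y →
      (B₀ * y ^ ((3:ℝ)/2) + D * y ^ l) *
        iteratedDeriv 3 (fun z : ℝ => B₀ * z ^ ((3:ℝ)/2) + D * z ^ l) y =
        -1 + (3/8) * D ^ 2 * y ^ (2 * l - 3)) ∧
    (2 < l → ∀ D : ℝ,
      (fun y : ℝ => (B₀ * y ^ ((3:ℝ)/2) + D * y ^ l) *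
          iteratedDeriv 3 (fun z : ℝ => B₀ * z ^ ((3:ℝ)/2) + D * z ^ l) y + 1)
        =o[nhdsWithin 0 (Set.Ioi 0)] fun y : ℝ => y) := by
  have hB2 : B₀ ^ 2 = 8/3 := by
    rw [hB₀, sq, Real.mul_self_sqrt (by norm_num)]
  have part1 : ∀ D : ℝ, ∀ y : ℝ, 0 < y →
      (B₀ * y ^ ((3:ℝ)/2) + D * y ^ l) *
        iteratedDeriv 3 (fun z : ℝ => B₀ * z ^ ((3:ℝ)/2) + D * z ^ l) y =
        -1 + (3/8) * D ^ 2 * y ^ (2 * l - 3) := by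
    intro D y hy
    rw [iter3 B₀ D ((3:ℝ)/2) l hy]
    have e1 : y ^ ((3:ℝ)/2) * y ^ ((3:ℝ)/2 - 3) = 1 := by
      rw [← Real.rpow_add hy]; norm_num
    have e2 : y ^ ((3:ℝ)/2) * y ^ (l - 3) = y ^ l * y ^ ((3:ℝ)/2 - 3) := by
      rw [← Real.rpow_add hy, ← Real.rpow_add hy]; ring_nf
    have e4 : y ^ l * y ^ (l - 3) = y ^ (2*l - 3) := by
      rw [← Real.rpow_add hy]; ring_nf
    linear_combination (-3/8*B₀^2)*e1 + (-3/8)*hB2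
      + (B₀*D*(y^((3:ℝ)/2)*y^(l-3)) + D^2*(y^l*y^(l-3)))*hl
      + (3/8*B₀*D)*e2 + (3/8*D^2)*e4
  refine ⟨part1, fun hl2 D => ?_⟩
  have heq : (fun y : ℝ => (B₀ * y ^ ((3:ℝ)/2) + D * y ^ l) *
          iteratedDeriv 3 (fun z : ℝ => B₀ * z ^ ((3:ℝ)/2) + D * z ^ l) y + 1)
      =ᶠ[𝓝[>] (0:ℝ)] fun y => (3/8*D^2*y^(2*l-4)) * y := by
    filter_upwards [self_mem_nhdsWithin] with y hy
    have hy' : (0:ℝ) < y := hy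
    rw [part1 D y hy']
    have : y ^ (2*l-4) * y = y ^ (2*l-3) := by
      nth_rewrite 2 [← Real.rpow_one y]
      rw [← Real.rpow_add hy']; ring_nf
    nlinarith [this]
  have h0 : Filter.Tendsto (fun y : ℝ => 3/8*D^2*y^(2*l-4)) (𝓝[>] (0:ℝ)) (𝓝 0) := by
    have hc : ContinuousAt (fun y : ℝ => y ^ (2*l-4)) 0 :=
      Real.continuousAt_rpow_const 0 (2*l-4) (Or.inr (by linarith))
    have : Filter.Tendsto (fun y : ℝ => y ^ (2*l-4)) (𝓝 (0:ℝ)) (𝓝 0) := by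
      have := hc.tendsto
      rwa [Real.zero_rpow (by linarith : 2*l-4 ≠ 0)] at this
    have hmono : 𝓝[>] (0:ℝ) ≤ 𝓝 (0:ℝ) := nhdsWithin_le_nhds
    have := (this.const_mul (3/8*D^2)).mono_left hmono
    simpa [mul_comm] using this
  have key : (fun y : ℝ => (3/8*D^2*y^(2*l-4)) * y) =o[𝓝[>] (0:ℝ)] (fun y => (1:ℝ) * y) :=
    IsLittleO.mul_isBigO ((isLittleO_one_iff ℝ).mpr h0) (isBigO_refl _ _)
  have key2 : (fun y : ℝ => (3/8*D^2*y^(2*l-4)) * y) =o[𝓝[>] (0:ℝ)] (fun y : ℝ => y) := by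
    simpa using key
  exact key2.congr' heq.symm Filter.EventuallyEq.rfl
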